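/- Fix c ≥ 2√α. Let v̄ : ℝ → ℝ be a monotonically increasing C² solution of equation (E1) with speed c satisfying 0 < v̄ < 1, and, for a fixed l with 0 < l < 1 - k + α k, let v̌ : ℝ → ℝ be a monotonically increasing C² solution of equation (E2) with speed c satisfying 0 < v̌ < (1 + kK* - K*)/(1 + kK* - lK*). Then there exists a number r ≥ 0 such that K*·v̄(ξ + r) ≥ K*·l·v̌(ξ) and v̄(ξ + r) ≥ v̌(ξ) for all ξ ∈ ℝ; that is, the shifted upper solution (K* v̄, v̄)(· + r) dominates the lower solution (K* l v̌, v̌) componentwise on ℝ. -/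

import Mathlib

open Filter

/-- The equilibrium value `K* = (1 - α)/(1 - k + αk)`. -/
noncomputable def Kstar (α k : ℝ) : ℝ := (1 - α) / (1 - k + α * k)

/-- A traveling wave solution of system (TW) with speed `c`. -/
def IsTravelingWave (α k c : ℝ) (u v : ℝ → ℝ) : Prop :=
  ContDiff ℝ 2 u ∧ ContDiff ℝ 2 v ∧
  (∀ ξ : ℝ, deriv (deriv u) ξ - c * deriv u ξ -
      (Kstar α k - u ξ) *
        (1 - α - (Kstar α k - u ξ + v ξ) / (1 + k * (Kstar α k - u ξ))) = 0) ∧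
  (∀ ξ : ℝ, deriv (deriv v) ξ - c * deriv v ξ +
      v ξ * (1 - (Kstar α k - u ξ + v ξ) / (1 + k * (Kstar α k - u ξ))) = 0) ∧
  Tendsto u atBot (nhds 0) ∧ Tendsto v atBot (nhds 0) ∧
  Tendsto u atTop (nhds (Kstar α k)) ∧ Tendsto v atTop (nhds 1)


/- ======================= auxiliary development ======================= -/

open Filter Set Real

/- ---------- helpers ---------- -/

lemma mono_deriv_nonneg {f : ℝ → ℝ} (hf : Monotone f) {d x : ℝ} (hd : HasDerivAt f d x) : 0 ≤ d := by
  rw [hasDerivAt_iff_tendsto_slope] at hd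
  have h1 : Tendsto (slope f x) (nhdsWithin x (Ioi x)) (nhds d) :=
    hd.mono_left (nhdsWithin_mono x (by intro y hy; simp [Set.mem_Ioi] at hy; simp [ne_of_gt hy]))
  refine ge_of_tendsto h1 ?_
  filter_upwards [self_mem_nhdsWithin] with y hy
  have : x < y := hy
  rw [slope_def_field]
  exact div_nonneg (by simpa using sub_nonneg.mpr (hf this.le)) (by linarith)

lemma stay_neg {G G' : ℝ → ℝ} {A B : ℝ}
    (hd : ∀ x, HasDerivAt G (G' x) x)
    (h0 : G A < 0)
    (hkey : ∀ x ∈ Icc A B, G x = 0 → G' x < 0) :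
    ∀ x ∈ Icc A B, G x < 0 := by
  by_contra hcon
  push_neg at hcon
  obtain ⟨x₀, hx₀, hGx₀⟩ := hcon
  have hGcont : Continuous G := by
    have : Differentiable ℝ G := fun x => (hd x).differentiableAt
    exact this.continuous
  set S : Set ℝ := {x ∈ Icc A B | 0 ≤ G x} with hS
  have hSne : S.Nonempty := ⟨x₀, hx₀, hGx₀⟩
  have hSclosed : IsClosed S := (isClosed_Icc.inter (isClosed_le continuous_const hGcont))
  have hSbdd : BddBelow S := ⟨A, fun y hy => hy.1.1⟩
  set m := sInf S with hm
  have hmS : m ∈ S := hSclosed.csInf_mem hSne hSbdd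
  have hmA : A < m := by
    rcases lt_or_eq_of_le hmS.1.1 with h | h
    · exact h
    · exact absurd (h ▸ hmS.2) (not_le.mpr h0)
  have hneg : ∀ x, A ≤ x → x < m → G x < 0 := by
    intro x hAx hxm
    by_contra hge
    push_neg at hge
    have : x ∈ S := ⟨⟨hAx, hxm.le.trans hmS.1.2⟩, hge⟩
    exact absurd (csInf_le hSbdd this) (not_le.mpr hxm)
  have hle : G m ≤ 0 := by
    have htd : Tendsto G (nhdsWithin m (Iio m)) (nhds (G m)) :=
      (hGcont.continuousAt).continuousWithinAt.tendsto
    refine le_of_tendsto htd ?_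
    filter_upwards [Ioo_mem_nhdsLT_of_mem (⟨hmA, le_refl m⟩ : m ∈ Ioc A m)] with y hy
    exact (hneg y hy.1.le hy.2).le
  have hGm : G m = 0 := le_antisymm hle hmS.2
  have hG'neg : G' m < 0 := hkey m hmS.1 hGm
  have hslope : Tendsto (slope G m) (nhdsWithin m (Iio m)) (nhds (G' m)) := by
    have := (hasDerivAt_iff_tendsto_slope).mp (hd m)
    exact this.mono_left (nhdsWithin_mono m (fun y hy => by
      simp only [Set.mem_Iio] at hy; simp [ne_of_lt hy]))
  have hge0 : 0 ≤ G' m := by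
    refine ge_of_tendsto hslope ?_
    filter_upwards [Ioo_mem_nhdsLT_of_mem (⟨hmA, le_refl m⟩ : m ∈ Ioc A m)] with y hy
    rw [slope_def_field]
    have h1 : G y < 0 := hneg y hy.1.le hy.2
    have h2 : y - m < 0 := by have := hy.2; linarith
    rw [hGm]
    have h3 : G y - 0 < 0 := by linarith
    exact le_of_lt (div_pos_of_neg_of_neg h3 h2)
  exact absurd hge0 (not_le.mpr hG'neg)

lemma hasDerivAt_expmul (m ξ : ℝ) : HasDerivAt (fun x : ℝ => Real.exp (m*x)) (m * Real.exp (m*ξ)) ξ := by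
  have h1 : HasDerivAt (fun x : ℝ => m*x) m ξ := by
    simpa using (hasDerivAt_id ξ).const_mul m
  simpa [mul_comm] using h1.exp

/- ---------- the general front structure ---------- -/

structure Front (c lam Lam S C3 : ℝ) (v F : ℝ → ℝ) : Prop where
  hv : ContDiff ℝ 2 v
  mono : Monotone v
  heq : ∀ ξ, deriv (deriv v) ξ = c * deriv v ξ - F (v ξ)
  hpos : ∀ ξ, 0 < v ξ
  hlt : ∀ ξ, v ξ < S
  hbot : Tendsto v atBot (nhds 0)
  hlam : 0 < lam
  hle : lam ≤ Lam
  hsum : lam + Lam = c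
  hC3 : 0 ≤ C3
  hF1 : ∀ x, 0 < x → x < S → 0 < F x
  hF3 : ∀ x, 0 < x → x < S → lam * Lam * x - F x ≤ C3 * x ^ 2

namespace Front

variable {c lam Lam S C3 : ℝ} {v F : ℝ → ℝ}

lemma d1 (h : Front c lam Lam S C3 v F) : Differentiable ℝ v :=
  h.hv.differentiable (by norm_num)

lemma d2 (h : Front c lam Lam S C3 v F) : Differentiable ℝ (deriv v) := by
  have h2 : ContDiff ℝ (1+1) v := by norm_num at h ⊢; exact h.hv
  exact (contDiff_succ_iff_deriv.mp h2).2.2.differentiable one_ne_zero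

lemma hv' (h : Front c lam Lam S C3 v F) (ξ : ℝ) : HasDerivAt v (deriv v ξ) ξ :=
  (h.d1 ξ).hasDerivAt

lemma hv'' (h : Front c lam Lam S C3 v F) (ξ : ℝ) :
    HasDerivAt (deriv v) (c * deriv v ξ - F (v ξ)) ξ := by
  rw [← h.heq]; exact (h.d2 ξ).hasDerivAt

lemma dv_nonneg (h : Front c lam Lam S C3 v F) (ξ : ℝ) : 0 ≤ deriv v ξ :=
  mono_deriv_nonneg h.mono (h.hv' ξ)

lemma hSpos (h : Front c lam Lam S C3 v F) : 0 < S := lt_trans (h.hpos 0) (h.hlt 0)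

/-- derivative of the weight `exp (m x) * (deriv v x - b * v x)` -/
lemma hasDerivAt_wt (h : Front c lam Lam S C3 v F) (m b ξ : ℝ) :
    HasDerivAt (fun x => Real.exp (m*x) * (deriv v x - b * v x))
      (Real.exp (m*ξ) * ((c - b + m) * deriv v ξ - F (v ξ) - m * b * v ξ)) ξ := by
  have h1 : HasDerivAt (fun x => deriv v x - b * v x)
      ((c * deriv v ξ - F (v ξ)) - b * deriv v ξ) ξ :=
    (h.hv'' ξ).sub ((h.hv' ξ).const_mul b)
  have h2 := (hasDerivAt_expmul m ξ).mul h1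
  refine h2.congr_deriv ?_
  ring

lemma deriv_pos (h : Front c lam Lam S C3 v F) (ξ : ℝ) : 0 < deriv v ξ := by
  rcases lt_or_eq_of_le (h.dv_nonneg ξ) with hlt0 | heq0
  · exact hlt0
  -- E = exp(-c x) * deriv v x is strictly decreasing
  set E : ℝ → ℝ := fun x => Real.exp (-c*x) * (deriv v x - 0 * v x) with hE
  have hEd : ∀ x, HasDerivAt E (Real.exp (-c*x) * (0 - F (v x) - 0)) x := by
    intro x
    have := h.hasDerivAt_wt (-c) 0 x
    convert this using 2 <;> ring
  have hEanti : StrictAnti E := by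
    apply strictAnti_of_deriv_neg
    intro x
    rw [(hEd x).deriv]
    have := h.hF1 (v x) (h.hpos x) (h.hlt x)
    have := Real.exp_pos (-c*x)
    nlinarith
  have h1 : E (ξ+1) < E ξ := hEanti (by linarith)
  have h2 : E ξ = 0 := by simp [hE, ← heq0]
  have h3 : 0 ≤ E (ξ+1) := by
    have := h.dv_nonneg (ξ+1)
    have := Real.exp_pos (-c*(ξ+1))
    simp only [hE]
    nlinarith
  linarith

lemma deriv_small (h : Front c lam Lam S C3 v F) {ε : ℝ} (hε : 0 < ε) (N : ℝ) :
    ∃ ξ, N ≤ ξ ∧ deriv v ξ < ε := by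
  by_contra hcon
  push_neg at hcon
  set X := N + S/ε with hX
  have hNX : N ≤ X := by
    have h1 := h.hSpos
    have h2 : 0 ≤ S/ε := div_nonneg h1.le hε.le
    rw [hX]; linarith
  have hmono : MonotoneOn (fun x => v x - ε * x) (Icc N X) := by
    apply monotoneOn_of_deriv_nonneg (convex_Icc N X)
    · exact (Continuous.sub (h.d1.continuous) (continuous_const.mul continuous_id)).continuousOn
    · intro x _
      exact ((h.d1 x).sub ((hasDerivAt_id x).const_mul ε).differentiableAt).differentiableWithinAt
    · intro x hx
      have hx' : N ≤ x := by
        rw [interior_Icc] at hx; exact hx.1.le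
      have hd : HasDerivAt (fun x => v x - ε * x) (deriv v x - ε) x := by
        simpa using (h.hv' x).fun_sub ((hasDerivAt_id x).const_mul ε)
      rw [hd.deriv]
      have := hcon x hx'
      linarith
  have h1 := hmono (left_mem_Icc.mpr hNX) (right_mem_Icc.mpr hNX) hNX
  simp only at h1
  have h2 : v X ≥ v N + S := by
    have hXN : ε * (X - N) = S := by
      rw [hX, add_sub_cancel_left]
      exact mul_div_cancel₀ _ hε.ne'
    nlinarith [h1]
  have := h.hpos N
  have := h.hlt X
  linarith

lemma deriv_lt (h : Front c lam Lam S C3 v F)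
    (hstrict : ∀ x, 0 < x → x < S → F x < lam * Lam * x)
    {μ ν : ℝ} (hμ : 0 < μ) (hν : 0 < ν) (hsum2 : μ + ν = c) (hprod : μ * ν = lam * Lam) :
    ∀ ξ, deriv v ξ < μ * v ξ := by
  intro ξ
  set A : ℝ → ℝ := fun x => Real.exp (-ν*x) * (deriv v x - μ * v x) with hA
  have hAd : ∀ x, HasDerivAt A (Real.exp (-ν*x) * (lam * Lam * v x - F (v x))) x := by
    intro x
    have := h.hasDerivAt_wt (-ν) μ x
    convert this using 2
    have : c - μ + -ν = 0 := by linarith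
    rw [this]
    have : -ν * μ = -(lam*Lam) := by rw [← hprod]; ring
    rw [this]; ring
  have hAmono : StrictMono A := by
    apply strictMono_of_deriv_pos
    intro x
    rw [(hAd x).deriv]
    have h1 := hstrict (v x) (h.hpos x) (h.hlt x)
    have h2 := Real.exp_pos (-ν*x)
    nlinarith
  have hkey : A (ξ+1) ≤ 0 := by
    by_contra hpos'
    push_neg at hpos'
    obtain ⟨ξ', hξ'1, hξ'2⟩ := h.deriv_small hpos' (max (ξ+1) 0)
    have hξ'a : ξ + 1 ≤ ξ' := le_trans (le_max_left _ _) hξ'1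
    have hξ'b : 0 ≤ ξ' := le_trans (le_max_right _ _) hξ'1
    have hmono2 : A (ξ+1) ≤ A ξ' := (hAmono.monotone hξ'a)
    have hexp1 : Real.exp (-ν*ξ') ≤ 1 := by
      apply Real.exp_le_one_iff.mpr
      nlinarith
    have hμv : 0 ≤ μ * v ξ' := by nlinarith [h.hpos ξ']
    rcases le_or_gt (deriv v ξ' - μ * v ξ') 0 with hc1 | hc1
    · have : A ξ' ≤ 0 := by
        have := Real.exp_pos (-ν*ξ')
        simp only [hA]
        nlinarith
      linarith
    · have : A ξ' ≤ deriv v ξ' - μ * v ξ' := by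
        simp only [hA]
        nlinarith [Real.exp_pos (-ν*ξ')]
      have : A ξ' < A (ξ+1) := by
        have := h.hpos ξ'
        nlinarith
      linarith
  have hAneg : A ξ < 0 := lt_of_lt_of_le (hAmono (by linarith)) hkey
  have hexp := Real.exp_pos (-ν*ξ)
  by_contra hge
  push_neg at hge
  have : 0 ≤ A ξ := by simp only [hA]; nlinarith
  linarith

end Front

section Part2
open Filter Set Real
namespace Front

variable {c lam Lam S C3 : ℝ} {v F : ℝ → ℝ}

lemma exp_transfer {a b x y : ℝ} (h : Real.exp a * x ≤ Real.exp b * y) :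
    x ≤ Real.exp (b-a) * y := by
  have h1 : Real.exp (-a) * (Real.exp a * x) = x := by
    rw [← mul_assoc, ← Real.exp_add]; simp
  have h2 : Real.exp (-a) * (Real.exp b * y) = Real.exp (b-a) * y := by
    rw [← mul_assoc, ← Real.exp_add]; ring_nf
  have h3 := mul_le_mul_of_nonneg_left h (Real.exp_pos (-a)).le
  rw [h1, h2] at h3
  exact h3

lemma tail_small (h : Front c lam Lam S C3 v F) {ε : ℝ} (hε : 0 < ε) :
    ∃ T : ℝ, ∀ ζ ≤ T, v ζ ≤ ε := by
  have h1 : ∀ᶠ ζ in atBot, v ζ ≤ ε := h.hbot.eventually (eventually_le_nhds hε)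
  rw [eventually_atBot] at h1
  exact h1

lemma tail_slope (h : Front c lam Lam S C3 v F) {d : ℝ} (hd0 : 0 < d) (hdl : d < lam) :
    ∃ T : ℝ, ∀ ξ ≤ T, (lam - d) * v ξ ≤ deriv v ξ := by
  set ρ := d * (Lam - lam + d) / 2 with hρdef
  have hρ : 0 < ρ := by
    have := h.hle
    rw [hρdef]; nlinarith
  obtain ⟨T₁, hT₁⟩ : ∃ T₁, ∀ ζ ≤ T₁, C3 * v ζ ≤ ρ := by
    have hC1' : (0:ℝ) < C3 + 1 := by linarith [h.hC3]
    obtain ⟨T₁, hT₁⟩ := h.tail_small (div_pos hρ hC1')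
    refine ⟨T₁, fun ζ hζ => ?_⟩
    have hC1 : (0:ℝ) < C3 + 1 := hC1'
    have h1 := hT₁ ζ hζ
    have h3 := h.hC3
    have h4 : C3 * v ζ ≤ C3 * (ρ/(C3+1)) := mul_le_mul_of_nonneg_left h1 h3
    have h5 : C3 * (ρ/(C3+1)) ≤ ρ := by
      have : C3 * (ρ/(C3+1)) = (C3*ρ)/(C3+1) := by ring
      rw [this, div_le_iff₀ hC1]
      nlinarith
    linarith
  refine ⟨T₁ - (lam/ρ + 1), fun ξ1 hξ1 => ?_⟩
  by_contra hcon
  push_neg at hcon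
  -- s = v'/v
  set s : ℝ → ℝ := fun x => deriv v x / v x with hs
  set s' : ℝ → ℝ := fun x =>
    ((c * deriv v x - F (v x)) * v x - deriv v x * deriv v x) / (v x)^2 with hs'
  have hsd : ∀ x, HasDerivAt s (s' x) x := by
    intro x
    exact (h.hv'' x).div (h.hv' x) (ne_of_gt (h.hpos x))
  -- key derivative bound
  have hkey : ∀ x, deriv v x ≤ (lam - d) * v x → C3 * v x ≤ ρ → s' x ≤ -ρ := by
    intro x hσ hρx
    have hv0 := h.hpos x
    have hdv0 := h.dv_nonneg x
    have hF := h.hF3 (v x) hv0 (h.hlt x)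
    rw [hs']
    simp only
    rw [div_le_iff₀ (pow_pos hv0 2)]
    have hc : c = lam + Lam := h.hsum.symm
    rw [hc]
    have hb1 : d * v x ≤ lam * v x - deriv v x := by nlinarith
    have hb2 : (Lam - lam + d) * v x ≤ Lam * v x - deriv v x := by nlinarith
    have hprod : (d * v x) * ((Lam - lam + d) * v x) ≤
        (lam * v x - deriv v x) * (Lam * v x - deriv v x) := by
      apply mul_le_mul hb1 hb2
      · exact mul_nonneg (by linarith [h.hle] : (0:ℝ) ≤ Lam - lam + d) hv0.le
      · nlinarith [mul_nonneg hd0.le hv0.le]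
    have hFvv := mul_le_mul_of_nonneg_right hF hv0.le
    have hρvv := mul_le_mul_of_nonneg_right hρx (sq_nonneg (v x))
    nlinarith [hprod, hFvv, hρvv]
  have hξ1T : ξ1 ≤ T₁ := by
    have : 0 < lam/ρ := div_pos h.hlam hρ
    linarith
  -- invariance: s < lam - d on [ξ1, T₁]
  have hstay : ∀ x ∈ Icc ξ1 T₁, s x - (lam - d) < 0 := by
    apply stay_neg (G' := s') (fun x => (hsd x).sub_const (lam - d))
    · have h1 := h.hpos ξ1
      have h2 : s ξ1 < lam - d := by
        rw [hs]; simp only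
        rw [div_lt_iff₀ h1]
        nlinarith [hcon]
      linarith
    · intro x hx hGx
      have hsx : s x = lam - d := by linarith
      have hσ : deriv v x ≤ (lam - d) * v x := by
        have h1 := h.hpos x
        rw [hs] at hsx
        simp only at hsx
        rw [div_eq_iff (ne_of_gt h1)] at hsx
        linarith [hsx]
      have := hkey x hσ (hT₁ x hx.2)
      linarith
  -- s decreases at rate ρ on [ξ1, T₁]
  have hanti : AntitoneOn (fun x => s x + ρ * x) (Icc ξ1 T₁) := by
    apply antitoneOn_of_deriv_nonpos (convex_Icc _ _)
    · apply Continuous.continuousOn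
      apply Continuous.add
      · exact (h.d2.continuous).div (h.d1.continuous) (fun x => ne_of_gt (h.hpos x))
      · exact continuous_const.mul continuous_id
    · intro x _
      exact ((hsd x).add ((hasDerivAt_id x).const_mul ρ)).differentiableAt.differentiableWithinAt
    · intro x hx
      rw [interior_Icc] at hx
      have hd : HasDerivAt (fun x => s x + ρ * x) (s' x + ρ) x := by
        simpa using (hsd x).fun_add ((hasDerivAt_id x).const_mul ρ)
      rw [hd.deriv]
      have h1 := hstay x ⟨hx.1.le, hx.2.le⟩
      have hσ : deriv v x ≤ (lam - d) * v x := by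
        have h2 := h.hpos x
        have h3 : deriv v x / v x < lam - d := by
          rw [hs] at h1; linarith
        nlinarith [(div_lt_iff₀ h2).mp h3]
      have := hkey x hσ (hT₁ x hx.2.le)
      linarith
  have h1 := hanti (left_mem_Icc.mpr hξ1T) (right_mem_Icc.mpr hξ1T) hξ1T
  simp only at h1
  
  have h2 : s T₁ ≤ s ξ1 - ρ * (T₁ - ξ1) := by linarith
  have h3 : s ξ1 < lam - d := by
    have := hstay ξ1 (left_mem_Icc.mpr hξ1T)
    linarith
  have h4 : lam / ρ + 1 ≤ T₁ - ξ1 := by linarith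
  have h5 : ρ * (T₁ - ξ1) ≥ lam + ρ := by
    have := mul_le_mul_of_nonneg_left h4 hρ.le
    calc ρ * (T₁ - ξ1) ≥ ρ * (lam/ρ + 1) := by nlinarith
    _ = lam + ρ := by field_simp
  have h6 : 0 < s T₁ := div_pos (h.deriv_pos T₁) (h.hpos T₁)
  linarith

end Front
end Part2

section Part3
open Filter Set Real
namespace Front

variable {c lam Lam S C3 : ℝ} {v F : ℝ → ℝ}

lemma exp_transfer' {a b x y : ℝ} (h : Real.exp a * x ≤ Real.exp b * y) :
    Real.exp (a-b) * x ≤ y := by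
  have h1 : Real.exp (-b) * (Real.exp a * x) = Real.exp (a-b) * x := by
    rw [← mul_assoc, ← Real.exp_add]; ring_nf
  have h2 : Real.exp (-b) * (Real.exp b * y) = y := by
    rw [← mul_assoc, ← Real.exp_add]; simp
  have h3 := mul_le_mul_of_nonneg_left h (Real.exp_pos (-b)).le
  rw [h1, h2] at h3
  exact h3

lemma mono_Iic {f f' : ℝ → ℝ} {T : ℝ} (hd : ∀ x, HasDerivAt f (f' x) x)
    (hpos : ∀ x < T, 0 ≤ f' x) : ∀ ξ ≤ T, f ξ ≤ f T := by
  have hmono : MonotoneOn f (Iic T) := by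
    apply monotoneOn_of_deriv_nonneg (convex_Iic T)
    · exact (Differentiable.continuous (fun x => (hd x).differentiableAt)).continuousOn
    · intro x _; exact (hd x).differentiableAt.differentiableWithinAt
    · intro x hx; rw [interior_Iic] at hx; rw [(hd x).deriv]; exact hpos x hx
  exact fun ξ hξ => hmono (mem_Iic.mpr hξ) (mem_Iic.mpr le_rfl) hξ

lemma anti_Iic {f f' : ℝ → ℝ} {T : ℝ} (hd : ∀ x, HasDerivAt f (f' x) x)
    (hneg : ∀ x < T, f' x ≤ 0) : ∀ ξ ≤ T, f T ≤ f ξ := by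
  have hanti : AntitoneOn f (Iic T) := by
    apply antitoneOn_of_deriv_nonpos (convex_Iic T)
    · exact (Differentiable.continuous (fun x => (hd x).differentiableAt)).continuousOn
    · intro x _; exact (hd x).differentiableAt.differentiableWithinAt
    · intro x hx; rw [interior_Iic] at hx; rw [(hd x).deriv]; exact hneg x hx
  exact fun ξ hξ => hanti (mem_Iic.mpr hξ) (mem_Iic.mpr le_rfl) hξ

lemma anti_between {f f' : ℝ → ℝ} {A B : ℝ} (hd : ∀ x, HasDerivAt f (f' x) x) (hAB : A ≤ B)
    (hneg : ∀ x, A ≤ x → x ≤ B → f' x ≤ 0) : f B ≤ f A := by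
  have hanti : AntitoneOn f (Icc A B) := by
    apply antitoneOn_of_deriv_nonpos (convex_Icc A B)
    · exact (Differentiable.continuous (fun x => (hd x).differentiableAt)).continuousOn
    · intro x _; exact (hd x).differentiableAt.differentiableWithinAt
    · intro x hx; rw [interior_Icc] at hx; rw [(hd x).deriv]; exact hneg x hx.1.le hx.2.le
  exact hanti (left_mem_Icc.mpr hAB) (right_mem_Icc.mpr hAB) hAB

/-- derivative of u = exp(-(m x)) v x -/
lemma hasDerivAt_u (h : Front c lam Lam S C3 v F) (m x : ℝ) :
    HasDerivAt (fun y => Real.exp (-(m*y)) * v y)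
      (Real.exp (-(m*x)) * (deriv v x - m * v x)) x := by
  have h1 : HasDerivAt (fun y : ℝ => Real.exp (-m*y)) (-m * Real.exp (-m*x)) x :=
    hasDerivAt_expmul (-m) x
  have h2 := h1.mul (h.hv' x)
  have h3 : ∀ y:ℝ, Real.exp (-m*y) = Real.exp (-(m*y)) := by intro y; ring_nf
  simp only [h3] at h2
  refine h2.congr_deriv ?_
  ring

/-- derivative of the `Bt` weight -/
lemma hasDerivAt_Bt (h : Front c lam Lam S C3 v F) {μ ν : ℝ}
    (hsum2 : μ + ν = c) (hprod : μ * ν = lam * Lam) (x : ℝ) :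
    HasDerivAt (fun y => Real.exp (-(ν*y)) * (deriv v y - μ * v y))
      (Real.exp (-(ν*x)) * (lam * Lam * v x - F (v x))) x := by
  have h0 := h.hasDerivAt_wt (-ν) μ x
  have h3 : ∀ y:ℝ, Real.exp (-ν*y) = Real.exp (-(ν*y)) := by intro y; ring_nf
  simp only [h3] at h0
  convert h0 using 2
  have e1 : c - μ + -ν = 0 := by linarith
  rw [e1]
  have e2 : -ν * μ = -(lam*Lam) := by rw [← hprod]; ring
  rw [e2]; ring

/-- weighted decay estimate -/
lemma decay_w (h : Front c lam Lam S C3 v F) {d T : ℝ}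
    (hT : ∀ ξ ≤ T, (lam - d) * v ξ ≤ deriv v ξ) :
    ∀ ξ ≤ T, Real.exp (-((lam-d)*ξ)) * v ξ ≤ Real.exp (-((lam-d)*T)) * v T := by
  have hd : ∀ x, HasDerivAt (fun y => Real.exp (-((lam-d)*y)) * v y)
      (Real.exp (-((lam-d)*x)) * (deriv v x - (lam-d) * v x)) x := fun x => h.hasDerivAt_u (lam-d) x
  apply mono_Iic hd
  intro x hx
  have h1 := hT x hx.le
  have h2 := (Real.exp_pos (-((lam-d)*x))).le
  nlinarith

/-- pointwise decay -/
lemma decay_pt (h : Front c lam Lam S C3 v F) {d T : ℝ}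
    (hT : ∀ ξ ≤ T, (lam - d) * v ξ ≤ deriv v ξ) :
    ∀ ξ ≤ T, v ξ ≤ (Real.exp (-((lam-d)*T)) * v T) * Real.exp ((lam-d)*ξ) := by
  intro ξ hξ
  have h1 := h.decay_w hT ξ hξ
  have h2 := exp_transfer h1
  calc v ξ ≤ Real.exp (-((lam-d)*T) - -((lam-d)*ξ)) * v T := h2
    _ = (Real.exp (-((lam-d)*T)) * v T) * Real.exp ((lam-d)*ξ) := by
        rw [show -((lam-d)*T) - -((lam-d)*ξ) = (lam-d)*ξ + -((lam-d)*T) by ring, Real.exp_add]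
        ring

/-- square decay bound: C3 * v z ^ 2 * exp(-(ν z)) ≤ C4 * exp(β z) -/
lemma sq_bound (h : Front c lam Lam S C3 v F) {d T : ℝ}
    (hT : ∀ ξ ≤ T, (lam - d) * v ξ ≤ deriv v ξ) (ν : ℝ) :
    ∀ z ≤ T, C3 * (v z)^2 * Real.exp (-(ν*z)) ≤
      (C3 * (Real.exp (-((lam-d)*T)) * v T)^2) * Real.exp ((2*(lam-d)-ν)*z) := by
  intro z hz
  set E := Real.exp (-((lam-d)*T)) * v T with hE
  have hEpos : 0 < E := mul_pos (Real.exp_pos _) (h.hpos T)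
  have h1 : v z ≤ E * Real.exp ((lam-d)*z) := h.decay_pt hT z hz
  have h2 : (v z)^2 ≤ (E * Real.exp ((lam-d)*z))^2 :=
    pow_le_pow_left₀ (h.hpos z).le h1 2
  have h3 : (E * Real.exp ((lam-d)*z))^2 = E^2 * Real.exp (2*(lam-d)*z) := by
    rw [mul_pow, pow_two (Real.exp ((lam-d)*z)), ← Real.exp_add]
    congr 2
    ring
  have h4 : Real.exp (2*(lam-d)*z) * Real.exp (-(ν*z)) = Real.exp ((2*(lam-d)-ν)*z) := by
    rw [← Real.exp_add]; congr 1; ring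
  have h5 : C3 * (v z)^2 ≤ C3 * (E^2 * Real.exp (2*(lam-d)*z)) := by
    rw [← h3]; exact mul_le_mul_of_nonneg_left h2 h.hC3
  calc C3 * (v z)^2 * Real.exp (-(ν*z))
      ≤ C3 * (E^2 * Real.exp (2*(lam-d)*z)) * Real.exp (-(ν*z)) :=
        mul_le_mul_of_nonneg_right h5 (Real.exp_pos _).le
    _ = (C3 * E^2) * (Real.exp (2*(lam-d)*z) * Real.exp (-(ν*z))) := by ring
    _ = (C3 * E^2) * Real.exp ((2*(lam-d)-ν)*z) := by rw [h4]

end Front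
end Part3

section Part4
open Filter Set Real
namespace Front

variable {c lam Lam S C3 : ℝ} {v F : ℝ → ℝ}

lemma unweight {m x A B : ℝ} (hle : Real.exp (-(m*x)) * A ≤ B) : A ≤ B * Real.exp (m*x) := by
  have h1 := mul_le_mul_of_nonneg_left hle (Real.exp_pos (m*x)).le
  have h2 : Real.exp (m*x) * (Real.exp (-(m*x)) * A) = A := by
    rw [← mul_assoc, ← Real.exp_add]; simp
  rw [h2] at h1
  calc A ≤ Real.exp (m*x) * B := h1
    _ = B * Real.exp (m*x) := mul_comm _ _

lemma unweight' {m x A B : ℝ} (hle : B ≤ Real.exp (-(m*x)) * A) : B * Real.exp (m*x) ≤ A := by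
  have h1 := mul_le_mul_of_nonneg_left hle (Real.exp_pos (m*x)).le
  have h2 : Real.exp (m*x) * (Real.exp (-(m*x)) * A) = A := by
    rw [← mul_assoc, ← Real.exp_add]; simp
  rw [h2] at h1
  calc B * Real.exp (m*x) = Real.exp (m*x) * B := mul_comm _ _
    _ ≤ A := h1

lemma lower_exp (h : Front c lam Lam S C3 v F)
    (hstrict : ∀ x, 0 < x → x < S → F x < lam * Lam * x) :
    ∀ T ξ, ξ ≤ T → Real.exp (lam*ξ - lam*T) * v T ≤ v ξ := by
  have hlt := h.deriv_lt hstrict h.hlam (lt_of_lt_of_le h.hlam h.hle) h.hsum rfl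
  intro T ξ hξ
  have hanti : Antitone (fun z => Real.exp (-(lam*z)) * v z) := by
    apply antitone_of_deriv_nonpos
    · exact fun x => (h.hasDerivAt_u lam x).differentiableAt
    · intro x
      rw [(h.hasDerivAt_u lam x).deriv]
      nlinarith [hlt x, Real.exp_pos (-(lam*x))]
  have h1 : Real.exp (-(lam*T)) * v T ≤ Real.exp (-(lam*ξ)) * v ξ := hanti hξ
  have h2 := exp_transfer' h1
  rw [show lam*ξ - lam*T = -(lam*T) - -(lam*ξ) by ring]
  exact h2

set_option maxHeartbeats 1600000 in
lemma upper_exp (h : Front c lam Lam S C3 v F) (hgap : lam < Lam) :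
    ∃ C T : ℝ, 0 < C ∧ ∀ ξ ≤ T, v ξ ≤ C * Real.exp (lam * ξ) := by
  have hlam := h.hlam
  have hd0 : 0 < lam/4 := by linarith
  have hdl : lam/4 < lam := by linarith
  obtain ⟨T, hT⟩ := h.tail_slope hd0 hdl
  set d : ℝ := lam/4 with hd
  set δ₀ := Lam - lam with hδ₀
  have hδ₀pos : 0 < δ₀ := by rw [hδ₀]; linarith
  set γ := lam - 2*d with hγ
  have hγpos : 0 < γ := by rw [hγ, hd]; linarith
  set β := 2*(lam-d) - Lam with hβ
  have hβγ : δ₀ + β = γ := by rw [hδ₀, hβ, hγ]; ring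
  set E := Real.exp (-((lam-d)*T)) * v T with hEdef
  set C4 := C3 * E^2 with hC4def
  have hC4 : 0 ≤ C4 := mul_nonneg h.hC3 (sq_nonneg E)
  set C5 := C4 * Real.exp (β*T) with hC5def
  have hC5 : 0 ≤ C5 := mul_nonneg hC4 (Real.exp_pos _).le
  set Bt : ℝ → ℝ := fun x => Real.exp (-(Lam*x)) * (deriv v x - lam * v x) with hBt
  set K := |Bt T| with hK
  have hKnn : 0 ≤ K := abs_nonneg _
  have hBtK : -K ≤ Bt T := neg_abs_le _
  have hBtd : ∀ x, HasDerivAt Bt (Real.exp (-(Lam*x)) * (lam*Lam*v x - F (v x))) x :=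
    fun x => h.hasDerivAt_Bt h.hsum rfl x
  -- step A : lower bound for Bt on (-∞, T]
  have hstepA : ∀ ζ ≤ T, Bt T - (C4*(Real.exp (β*ζ)+Real.exp (β*T))) * (T - ζ) ≤ Bt ζ := by
    intro ζ hζ
    set M := C4*(Real.exp (β*ζ)+Real.exp (β*T)) with hM
    have hB' : ∀ z, ζ ≤ z → z ≤ T → Real.exp (-(Lam*z)) * (lam*Lam*v z - F (v z)) ≤ M := by
      intro z h1z h2z
      have hb1 := h.hF3 (v z) (h.hpos z) (h.hlt z)
      have hsq := h.sq_bound hT Lam z h2z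
      have hb2 : Real.exp (-(Lam*z)) * (lam*Lam*v z - F (v z)) ≤ C3*(v z)^2*Real.exp (-(Lam*z)) := by
        nlinarith [Real.exp_pos (-(Lam*z))]
      have hb3 : C3*(v z)^2*Real.exp (-(Lam*z)) ≤ C4 * Real.exp (β*z) := by
        rw [hC4def, hEdef, hβ]
        exact hsq
      have hexpb : Real.exp (β*z) ≤ Real.exp (β*ζ) + Real.exp (β*T) := by
        rcases le_total β 0 with hβ0 | hβ0
        · have hle2 : β*z ≤ β*ζ := by nlinarith
          nlinarith [Real.exp_le_exp.mpr hle2, Real.exp_pos (β*T)]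
        · have hle2 : β*z ≤ β*T := by nlinarith
          nlinarith [Real.exp_le_exp.mpr hle2, Real.exp_pos (β*ζ)]
      have hb4 : C4 * Real.exp (β*z) ≤ M := by
        rw [hM]
        exact mul_le_mul_of_nonneg_left hexpb hC4
      linarith
    have hBtM : ∀ x, HasDerivAt (fun z => Bt z - M*z)
        (Real.exp (-(Lam*x)) * (lam*Lam*v x - F (v x)) - M) x := by
      intro x
      have h1 : HasDerivAt (fun z : ℝ => M*z) M x := by
        simpa using (hasDerivAt_id x).const_mul M
      exact (hBtd x).sub h1
    have hfin := anti_between hBtM hζ (fun x h1x h2x => by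
      have := hB' x h1x h2x
      linarith)
    linarith
  -- the corrector Ψ
  set u : ℝ → ℝ := fun z => Real.exp (-(lam*z)) * v z with hu
  set Ψ : ℝ → ℝ := fun z => K*Real.exp (δ₀*z)/δ₀
      + C4*((T-z)*Real.exp (γ*z)/γ + Real.exp (γ*z)/γ^2)
      + C5*((T-z)*Real.exp (δ₀*z)/δ₀ + Real.exp (δ₀*z)/δ₀^2) with hΨ
  have hΨd : ∀ x, HasDerivAt Ψ
      (K*Real.exp (δ₀*x) + C4*((T-x)*Real.exp (γ*x)) + C5*((T-x)*Real.exp (δ₀*x))) x := by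
    intro x
    have e1 : HasDerivAt (fun z:ℝ => (T-z)) (-1 : ℝ) x := by
      simpa using (hasDerivAt_const x T).fun_sub (hasDerivAt_id x)
    have p1 : HasDerivAt (fun z => K*Real.exp (δ₀*z)/δ₀) (K*Real.exp (δ₀*x)) x := by
      have h1 := ((hasDerivAt_expmul δ₀ x).const_mul K).div_const δ₀
      refine h1.congr_deriv ?_
      field_simp
    have p2 : HasDerivAt (fun z => (T-z)*Real.exp (γ*z)/γ + Real.exp (γ*z)/γ^2)
        ((T-x)*Real.exp (γ*x)) x := by
      have q1 := ((e1.mul (hasDerivAt_expmul γ x)).div_const γ).add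
        ((hasDerivAt_expmul γ x).div_const (γ^2))
      refine q1.congr_deriv ?_
      field_simp
      ring
    have p3 : HasDerivAt (fun z => (T-z)*Real.exp (δ₀*z)/δ₀ + Real.exp (δ₀*z)/δ₀^2)
        ((T-x)*Real.exp (δ₀*x)) x := by
      have q1 := ((e1.mul (hasDerivAt_expmul δ₀ x)).div_const δ₀).add
        ((hasDerivAt_expmul δ₀ x).div_const (δ₀^2))
      refine q1.congr_deriv ?_
      field_simp
      ring
    exact (p1.add (p2.const_mul C4)).add (p3.const_mul C5)
  have hΨnn : ∀ z ≤ T, 0 ≤ Ψ z := by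
    intro z hz
    rw [hΨ]
    have e1 := (Real.exp_pos (δ₀*z)).le
    have e2 := (Real.exp_pos (γ*z)).le
    have h1 : 0 ≤ K*Real.exp (δ₀*z)/δ₀ := by positivity
    have h2 : 0 ≤ (T-z)*Real.exp (γ*z)/γ + Real.exp (γ*z)/γ^2 := by
      have g1 : 0 ≤ (T-z)*Real.exp (γ*z)/γ := by
        apply div_nonneg _ hγpos.le
        exact mul_nonneg (by linarith) e2
      have g2 : 0 ≤ Real.exp (γ*z)/γ^2 := by positivity
      linarith
    have h3 : 0 ≤ (T-z)*Real.exp (δ₀*z)/δ₀ + Real.exp (δ₀*z)/δ₀^2 := by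
      have g1 : 0 ≤ (T-z)*Real.exp (δ₀*z)/δ₀ := by
        apply div_nonneg _ hδ₀pos.le
        exact mul_nonneg (by linarith) e1
      have g2 : 0 ≤ Real.exp (δ₀*z)/δ₀^2 := by positivity
      linarith
    have h4 : 0 ≤ C4*((T-z)*Real.exp (γ*z)/γ + Real.exp (γ*z)/γ^2) := mul_nonneg hC4 h2
    have h5 : 0 ≤ C5*((T-z)*Real.exp (δ₀*z)/δ₀ + Real.exp (δ₀*z)/δ₀^2) := mul_nonneg hC5 h3
    linarith
  -- monotonicity of u + Ψ on (-∞,T]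
  have hmain : ∀ ξ ≤ T, u ξ + Ψ ξ ≤ u T + Ψ T := by
    apply mono_Iic (f' := fun x => (Real.exp (-(lam*x)) * (deriv v x - lam * v x))
        + (K*Real.exp (δ₀*x) + C4*((T-x)*Real.exp (γ*x)) + C5*((T-x)*Real.exp (δ₀*x))))
    · intro x
      exact (h.hasDerivAt_u lam x).add (hΨd x)
    · intro x hx
      have hid1 : Real.exp (δ₀*x) * Real.exp (-(Lam*x)) = Real.exp (-(lam*x)) := by
        rw [← Real.exp_add]; congr 1; rw [hδ₀]; ring
      have hid2 : Real.exp (δ₀*x) * Real.exp (β*x) = Real.exp (γ*x) := by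
        rw [← Real.exp_add]; congr 1; rw [← hβγ]; ring
      have hA := hstepA x hx.le
      have hmul := mul_le_mul_of_nonneg_left hA (Real.exp_pos (δ₀*x)).le
      -- expand
      have hexpand : Real.exp (δ₀*x) * Bt x = Real.exp (-(lam*x)) * (deriv v x - lam * v x) := by
        rw [hBt]
        simp only
        rw [← mul_assoc, hid1]
      have hmul2 : Real.exp (δ₀*x) * ((C4*(Real.exp (β*x)+Real.exp (β*T))) * (T - x))
          = C4*(T-x)*Real.exp (γ*x) + C5*(T-x)*Real.exp (δ₀*x) := by
        rw [hC5def, ← hid2]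
        ring
      have hmulK : (-K) * Real.exp (δ₀*x) ≤ Bt T * Real.exp (δ₀*x) :=
        mul_le_mul_of_nonneg_right hBtK (Real.exp_pos (δ₀*x)).le
      nlinarith [hmul, hmul2, hmulK, hexpand]
  -- conclude
  refine ⟨u T + Ψ T, T, ?_, ?_⟩
  · have h1 : 0 < u T := by
      rw [hu]
      exact mul_pos (Real.exp_pos _) (h.hpos T)
    have h2 : 0 ≤ Ψ T := hΨnn T le_rfl
    linarith
  · intro ξ hξ
    have h1 : u ξ ≤ u T + Ψ T := by
      have := hmain ξ hξ
      have h2 := hΨnn ξ hξ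
      linarith
    have h3 : Real.exp (-(lam*ξ)) * v ξ ≤ u T + Ψ T := by
      rw [hu] at h1
      exact h1
    exact unweight h3

end Front
end Part4

section Part5
open Filter Set Real
namespace Front

variable {c lam Lam S C3 : ℝ} {v F : ℝ → ℝ}

set_option maxHeartbeats 1600000 in
lemma upper_crit (h : Front c lam Lam S C3 v F) (hcrit : Lam = lam) :
    ∃ C T : ℝ, 0 < C ∧ ∀ ξ ≤ T, v ξ ≤ C * (1 + (T - ξ)) * Real.exp (lam * ξ) := by
  have hlam := h.hlam
  have hd0 : 0 < lam/4 := by linarith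
  have hdl : lam/4 < lam := by linarith
  obtain ⟨T, hT⟩ := h.tail_slope hd0 hdl
  have hsum2 : lam + lam = c := by rw [← h.hsum, hcrit]
  have hprod2 : lam * lam = lam * Lam := by rw [hcrit]
  set γ := lam - 2*(lam/4) with hγ
  have hγpos : 0 < γ := by rw [hγ]; linarith
  set C4 := C3 * (Real.exp (-((lam-lam/4)*T)) * v T)^2 with hC4def
  have hC4 : 0 ≤ C4 := mul_nonneg h.hC3 (sq_nonneg _)
  set Γ : ℝ → ℝ := fun z => Real.exp (-(lam*z)) * (lam * v z - deriv v z) with hΓ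
  have hΓd : ∀ x, HasDerivAt Γ (Real.exp (-(lam*x)) * (F (v x) - lam*Lam*v x)) x := by
    intro x
    have h0 := (h.hasDerivAt_Bt hsum2 hprod2 x).neg
    have hfun : Γ = fun y => -(Real.exp (-(lam*y)) * (deriv v y - lam * v y)) := by
      funext y; rw [hΓ]; ring
    rw [hfun]
    refine h0.congr_deriv ?_
    ring
  -- bound derivative from below on (-∞, T]
  have hΓ'lb : ∀ z ≤ T, -(C4 * Real.exp (γ*z)) ≤ Real.exp (-(lam*z)) * (F (v z) - lam*Lam*v z) := by
    intro z hz
    have hb1 := h.hF3 (v z) (h.hpos z) (h.hlt z)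
    have hsq := h.sq_bound hT lam z hz
    have hb3 : C3*(v z)^2*Real.exp (-(lam*z)) ≤ C4 * Real.exp (γ*z) := by
      rw [hC4def, hγ]
      rw [show lam - 2*(lam/4) = 2*(lam-lam/4)-lam by ring]
      exact hsq
    have hb2 : (lam*Lam*v z - F (v z)) * Real.exp (-(lam*z)) ≤ (C3*(v z)^2) * Real.exp (-(lam*z)) :=
      mul_le_mul_of_nonneg_right hb1 (Real.exp_pos _).le
    nlinarith [hb2, hb3]
  -- Γ ζ ≤ Γmax on (-∞,T]
  have hp1 : ∀ x, HasDerivAt (fun z => C4*Real.exp (γ*z)/γ) (C4*Real.exp (γ*x)) x := by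
    intro x
    have h1 := ((hasDerivAt_expmul γ x).const_mul C4).div_const γ
    refine h1.congr_deriv ?_
    field_simp
  have hΓle : ∀ ζ ≤ T, Γ ζ ≤ Γ T + C4*Real.exp (γ*T)/γ := by
    intro ζ hζ
    have hmono := mono_Iic (f := fun z => Γ z + C4*Real.exp (γ*z)/γ)
      (f' := fun x => Real.exp (-(lam*x)) * (F (v x) - lam*Lam*v x) + C4*Real.exp (γ*x))
      (fun x => (hΓd x).add (hp1 x))
      (fun x hx => by
        show (0:ℝ) ≤ Real.exp (-(lam*x)) * (F (v x) - lam*Lam*v x) + C4*Real.exp (γ*x)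
        have := hΓ'lb x hx.le
        linarith)
      ζ hζ
    have hnn : 0 ≤ C4*Real.exp (γ*ζ)/γ := by positivity
    linarith
  set Γm := max (Γ T + C4*Real.exp (γ*T)/γ) 0 with hΓm
  have hΓmnn : 0 ≤ Γm := le_max_right _ _
  have hΓub : ∀ ζ ≤ T, Γ ζ ≤ Γm := fun ζ hζ => le_trans (hΓle ζ hζ) (le_max_left _ _)
  -- u grows at most linearly
  set u : ℝ → ℝ := fun z => Real.exp (-(lam*z)) * v z with hu
  have humain : ∀ ξ ≤ T, u ξ ≤ u T + Γm * (T - ξ) := by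
    intro ξ hξ
    have hmono := mono_Iic (f := fun z => u z + Γm*z)
      (f' := fun x => Real.exp (-(lam*x)) * (deriv v x - lam * v x) + Γm)
      (fun x => (h.hasDerivAt_u lam x).add (by simpa using (hasDerivAt_id x).const_mul Γm))
      (fun x hx => by
        show (0:ℝ) ≤ Real.exp (-(lam*x)) * (deriv v x - lam * v x) + Γm
        have h1 := hΓub x hx.le
        have h2 : Real.exp (-(lam*x)) * (deriv v x - lam * v x) = -(Γ x) := by
          rw [hΓ]; ring
        rw [h2]; linarith)
      ξ hξ
    linarith
  refine ⟨max (u T) Γm, T, ?_, ?_⟩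
  · have h1 : 0 < u T := mul_pos (Real.exp_pos _) (h.hpos T)
    exact lt_of_lt_of_le h1 (le_max_left _ _)
  · intro ξ hξ
    have h1 := humain ξ hξ
    have h2 : u ξ ≤ max (u T) Γm * (1 + (T - ξ)) := by
      have ha := le_max_left (u T) Γm
      have hb := le_max_right (u T) Γm
      nlinarith [sub_nonneg.mpr hξ, mul_le_mul_of_nonneg_right hb (sub_nonneg.mpr hξ)]
    have h3 : Real.exp (-(lam*ξ)) * v ξ ≤ max (u T) Γm * (1 + (T - ξ)) := h2
    have := unweight h3
    calc v ξ ≤ max (u T) Γm * (1 + (T - ξ)) * Real.exp (lam*ξ) := this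
      _ = max (u T) Γm * (1 + (T - ξ)) * Real.exp (lam*ξ) := rfl

set_option maxHeartbeats 1600000 in
lemma lower_crit (h : Front c lam Lam S C3 v F) (hcrit : Lam = lam)
    (hstrict : ∀ x, 0 < x → x < S → F x < lam * Lam * x) :
    ∃ c₁ : ℝ, 0 < c₁ ∧ ∀ ξ ≤ (0:ℝ), c₁ * (1 + (0 - ξ)) * Real.exp (lam * ξ) ≤ v ξ := by
  have hsum2 : lam + lam = c := by rw [← h.hsum, hcrit]
  have hprod2 : lam * lam = lam * Lam := by rw [hcrit]
  set Γ : ℝ → ℝ := fun z => Real.exp (-(lam*z)) * (lam * v z - deriv v z) with hΓ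
  have hΓd : ∀ x, HasDerivAt Γ (Real.exp (-(lam*x)) * (F (v x) - lam*Lam*v x)) x := by
    intro x
    have h0 := (h.hasDerivAt_Bt hsum2 hprod2 x).neg
    have hfun : Γ = fun y => -(Real.exp (-(lam*y)) * (deriv v y - lam * v y)) := by
      funext y; rw [hΓ]; ring
    rw [hfun]
    refine h0.congr_deriv ?_
    ring
  have hΓpos : ∀ z, 0 < Γ z := by
    intro z
    have h1 := h.deriv_lt hstrict h.hlam h.hlam hsum2 hprod2 z
    have h2 := Real.exp_pos (-(lam*z))
    rw [hΓ]
    simp only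
    nlinarith
  have hΓanti : Antitone Γ := by
    apply antitone_of_deriv_nonpos
    · exact fun x => (hΓd x).differentiableAt
    · intro x
      rw [(hΓd x).deriv]
      have h1 := (hstrict (v x) (h.hpos x) (h.hlt x)).le
      have h2 := (Real.exp_pos (-(lam*x))).le
      nlinarith
  set u : ℝ → ℝ := fun z => Real.exp (-(lam*z)) * v z with hu
  have humain : ∀ ξ ≤ (0:ℝ), u 0 + Γ 0 * (0 - ξ) ≤ u ξ := by
    intro ξ hξ
    have hanti := anti_Iic (f := fun z => u z + Γ 0 * z)
      (f' := fun x => Real.exp (-(lam*x)) * (deriv v x - lam * v x) + Γ 0)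
      (fun x => (h.hasDerivAt_u lam x).add (by simpa using (hasDerivAt_id x).const_mul (Γ 0)))
      (fun x hx => by
        show Real.exp (-(lam*x)) * (deriv v x - lam * v x) + Γ 0 ≤ 0
        have h1 : Γ 0 ≤ Γ x := hΓanti hx.le
        have h2 : Real.exp (-(lam*x)) * (deriv v x - lam * v x) = -(Γ x) := by
          rw [hΓ]; ring
        rw [h2]; linarith)
      ξ hξ
    linarith
  refine ⟨min (u 0) (Γ 0), ?_, ?_⟩
  · have h1 : 0 < u 0 := mul_pos (Real.exp_pos _) (h.hpos 0)
    exact lt_min h1 (hΓpos 0)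
  · intro ξ hξ
    have h1 := humain ξ hξ
    have h2 : min (u 0) (Γ 0) * (1 + (0 - ξ)) ≤ u 0 + Γ 0 * (0 - ξ) := by
      have ha := min_le_left (u 0) (Γ 0)
      have hb := min_le_right (u 0) (Γ 0)
      nlinarith [sub_nonneg.mpr hξ, mul_le_mul_of_nonneg_right hb (sub_nonneg.mpr hξ)]
    have h3 : min (u 0) (Γ 0) * (1 + (0 - ξ)) ≤ Real.exp (-(lam*ξ)) * v ξ := by
      have := le_trans h2 h1
      exact this
    exact unweight' h3

end Front
end Part5

section Part6
open Filter Set Real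

lemma exp_sq_lower {z : ℝ} (hz : 0 ≤ z) : z^2/4 ≤ Real.exp z := by
  have h1 := Real.add_one_le_exp (z/2)
  have h2 : (z/2 + 1)^2 ≤ (Real.exp (z/2))^2 := by
    apply pow_le_pow_left₀ (by linarith) h1
  have h3 : (Real.exp (z/2))^2 = Real.exp z := by
    rw [pow_two, ← Real.exp_add]
    congr 1; ring
  nlinarith [h2, h3]

lemma exp_neg_mul_sq {z : ℝ} (hz : 0 ≤ z) : Real.exp (-z) * z^2 ≤ 4 := by
  have h1 := exp_sq_lower hz
  have h2 : Real.exp (-z) * Real.exp z = 1 := by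
    rw [← Real.exp_add]; simp
  nlinarith [Real.exp_pos (-z), mul_le_mul_of_nonneg_left h1 (Real.exp_pos (-z)).le]

lemma exp_beats_linear {lam c₁ M : ℝ} (hlam : 0 < lam) (hc₁ : 0 < c₁) (hM : 0 ≤ M) :
    ∃ r₁ : ℝ, 0 ≤ r₁ ∧ ∀ r, r₁ ≤ r → M * (1 + r) ≤ c₁ * Real.exp (lam * r) := by
  refine ⟨max 1 (8*M/(c₁*lam^2)), le_trans zero_le_one (le_max_left _ _), fun r hr => ?_⟩
  have hr1 : 1 ≤ r := le_trans (le_max_left _ _) hr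
  have hr2 : 8*M/(c₁*lam^2) ≤ r := le_trans (le_max_right _ _) hr
  have hrpos : 0 < r := by linarith
  have hz : 0 ≤ lam * r := by positivity
  have he := exp_sq_lower hz
  have h8 : 8*M ≤ c₁*lam^2*r := by
    rw [div_le_iff₀ (by positivity)] at hr2; linarith
  nlinarith [mul_le_mul_of_nonneg_left he hc₁.le, mul_le_mul_of_nonneg_right h8 hrpos.le,
    mul_pos hrpos hrpos, sq_nonneg (lam*r)]

lemma decay_linear_small {lam Cc A ε : ℝ} (hlam : 0 < lam) (hCc : 0 < Cc) (hε : 0 < ε) :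
    ∃ T₂ : ℝ, T₂ ≤ A ∧ 1/lam ≤ 1 + (A - T₂) ∧
      Cc * (1 + (A - T₂)) * Real.exp (lam * T₂) ≤ ε := by
  set w := max (max 1 (|A| + 1/lam)) (max (|A|+1) (4*Cc*(2+|A|)/(lam^2*ε))) with hw
  have hw1 : 1 ≤ w := le_trans (le_max_left _ _) (le_max_left _ _)
  have hw2 : |A| + 1/lam ≤ w := le_trans (le_max_right _ _) (le_max_left _ _)
  have hw3 : |A| + 1 ≤ w := le_trans (le_max_left _ _) (le_max_right _ _)
  have hw4 : 4*Cc*(2+|A|)/(lam^2*ε) ≤ w := le_trans (le_max_right _ _) (le_max_right _ _)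
  have hA1 : -|A| ≤ A := neg_abs_le A
  have hA2 : A ≤ |A| := le_abs_self A
  have hwpos : 0 < w := by linarith
  refine ⟨-w, by linarith, ?_, ?_⟩
  · have : 0 < 1/lam := by positivity
    linarith
  · have hz : 0 ≤ lam * w := by positivity
    have hb := exp_neg_mul_sq hz
    have hid : lam * (-w) = -(lam*w) := by ring
    rw [hid]
    have hexp : Real.exp (-(lam*w)) ≤ 4/(lam*w)^2 := by
      rw [le_div_iff₀ (by positivity)]
      exact hb
    have hq1 : 0 ≤ Cc * (1 + (A - -w)) := by
      apply mul_nonneg hCc.le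
      linarith
    have step1 : Cc * (1 + (A - -w)) * Real.exp (-(lam*w)) ≤ Cc * (1 + (A - -w)) * (4/(lam*w)^2) :=
      mul_le_mul_of_nonneg_left hexp hq1
    have step2 : Cc * (1 + (A - -w)) * (4/(lam*w)^2) ≤ ε := by
      rw [div_eq_mul_inv, ← mul_assoc]
      rw [← div_eq_mul_inv]
      rw [div_le_iff₀ (by positivity)]
      -- 4 Cc (1+A+w) ≤ ε lam² w²
      have hC1 : 1 + (A - -w) ≤ (2+|A|)*w := by nlinarith
      have hC2 : 4*Cc*(2+|A|) ≤ lam^2*ε*w := by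
        rw [div_le_iff₀ (by positivity)] at hw4; linarith
      nlinarith [mul_le_mul_of_nonneg_left hC1 (by linarith : (0:ℝ) ≤ 4*Cc),
        mul_le_mul_of_nonneg_right hC2 hwpos.le]
    linarith

end Part6

section Part7
open Filter Set Real

variable {α k l x : ℝ}

lemma kstar_pos (hα : 0 < α) (hα1 : α < 1) (hk : 0 < k) (hk1 : k < 1) :
    0 < 1 - k + α*k ∧ 0 < Kstar α k ∧ (1-k+α*k) * Kstar α k = 1-α := by
  have hD : 0 < 1 - k + α*k := by nlinarith
  refine ⟨hD, div_pos (by linarith) hD, ?_⟩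
  rw [Kstar]; exact mul_div_cancel₀ _ hD.ne'

lemma q1_eq (hα : 0 < α) (hα1 : α < 1) (hk : 0 < k) (hk1 : k < 1) (x : ℝ) :
    (1-k+α*k) * (1 + k*Kstar α k*(1-x)) = 1 - k*(1-α)*x := by
  obtain ⟨hD, hK, hDK⟩ := kstar_pos hα hα1 hk hk1
  linear_combination (1-x)*k*hDK

lemma q1_pos (hα : 0 < α) (hα1 : α < 1) (hk : 0 < k) (hk1 : k < 1)
    (hx0 : 0 ≤ x) (hx1 : x ≤ 1) : 0 < (1-k+α*k) * (1 + k*Kstar α k*(1-x)) := by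
  rw [q1_eq hα hα1 hk hk1]
  have h1 : k*(1-α) < 1 := by nlinarith
  have h0 : (0:ℝ) ≤ k*(1-α) := by nlinarith
  have h2 : k*(1-α)*x ≤ k*(1-α)*1 := mul_le_mul_of_nonneg_left hx1 h0
  linarith

lemma F1_pos (hα : 0 < α) (hα1 : α < 1) (hk : 0 < k) (hk1 : k < 1)
    (hx0 : 0 < x) (hx1 : x < 1) :
    0 < α / ((1-k+α*k) * (1 + k*Kstar α k*(1-x))) * (x*(1-x)) :=
  mul_pos (div_pos hα (q1_pos hα hα1 hk hk1 hx0.le hx1.le)) (mul_pos hx0 (by linarith))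

lemma F1_lt (hα : 0 < α) (hα1 : α < 1) (hk : 0 < k) (hk1 : k < 1)
    (hx0 : 0 < x) (hx1 : x < 1) :
    α / ((1-k+α*k) * (1 + k*Kstar α k*(1-x))) * (x*(1-x)) < α * x := by
  have hq := q1_eq hα hα1 hk hk1 x
  have hqpos := q1_pos hα hα1 hk hk1 hx0.le hx1.le
  rw [div_mul_eq_mul_div, div_lt_iff₀ hqpos, hq]
  have h1 : k*(1-α) < 1 := by nlinarith
  have h3 : 0 < α*x*x*(1-k*(1-α)) :=
    mul_pos (mul_pos (mul_pos hα hx0) hx0) (by linarith)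
  nlinarith [h3]

lemma F1_sub (hα : 0 < α) (hα1 : α < 1) (hk : 0 < k) (hk1 : k < 1)
    (hx0 : 0 < x) (hx1 : x < 1) :
    α*x - α / ((1-k+α*k) * (1 + k*Kstar α k*(1-x))) * (x*(1-x)) ≤ α * x^2 := by
  have hq := q1_eq hα hα1 hk hk1 x
  have hqpos := q1_pos hα hα1 hk hk1 hx0.le hx1.le
  have h2 : α*x - α / ((1-k+α*k) * (1 + k*Kstar α k*(1-x))) * (x*(1-x))
      = (α*x*((1-k+α*k) * (1 + k*Kstar α k*(1-x))) - α*(x*(1-x)))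
        / ((1-k+α*k) * (1 + k*Kstar α k*(1-x))) := by
    rw [div_mul_eq_mul_div, sub_div' hqpos.ne']
  rw [h2, div_le_iff₀ hqpos, hq]
  have h4 : 0 ≤ α*(k*(1-α))*(x^2)*(1-x) := by
    apply mul_nonneg
    apply mul_nonneg
    apply mul_nonneg hα.le
    · nlinarith
    · exact sq_nonneg x
    · linarith
  nlinarith [h4]

-- facts about the limit Lq and F2
lemma den_facts (hα : 0 < α) (hα1 : α < 1) (hk : 0 < k) (hk1 : k < 1)
    (hl : 0 < l) (hl1 : l < 1 - k + α*k) :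
    0 < 1 + k*Kstar α k - Kstar α k ∧ 0 < 1 + k*Kstar α k - l*Kstar α k ∧
    (1-k+α*k)*(1 + k*Kstar α k - Kstar α k) = α ∧
    (1-k+α*k)*(1 + k*Kstar α k - l*Kstar α k) = 1 - l*(1-α) ∧
    l < 1 := by
  obtain ⟨hD, hK, hDK⟩ := kstar_pos hα hα1 hk hk1
  have hl2 : l < 1 := by nlinarith
  have e1 : (1-k+α*k)*(1 + k*Kstar α k - Kstar α k) = α := by
    linear_combination (k-1)*hDK
  have e2 : (1-k+α*k)*(1 + k*Kstar α k - l*Kstar α k) = 1 - l*(1-α) := by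
    linear_combination (k-l)*hDK
  refine ⟨?_, ?_, e1, e2, hl2⟩
  · nlinarith
  · nlinarith

lemma Lq_facts (hα : 0 < α) (hα1 : α < 1) (hk : 0 < k) (hk1 : k < 1)
    (hl : 0 < l) (hl1 : l < 1 - k + α*k) :
    0 < (1 + k*Kstar α k - Kstar α k) / (1 + k*Kstar α k - l*Kstar α k) ∧
    (1 + k*Kstar α k - Kstar α k) / (1 + k*Kstar α k - l*Kstar α k) < 1 := by
  obtain ⟨hd1, hd2, e1, e2, hl2⟩ := den_facts hα hα1 hk hk1 hl hl1
  obtain ⟨hD, hK, hDK⟩ := kstar_pos hα hα1 hk hk1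
  constructor
  · exact div_pos hd1 hd2
  · rw [div_lt_one hd2]
    nlinarith

lemma q2_eq (hα : 0 < α) (hα1 : α < 1) (hk : 0 < k) (hk1 : k < 1) (hl : 0 < l) (x : ℝ) :
    (1-k+α*k) * (1 + k*Kstar α k*(1-l*x)) = 1 - k*l*(1-α)*x := by
  obtain ⟨hD, hK, hDK⟩ := kstar_pos hα hα1 hk hk1
  linear_combination (1-l*x)*k*hDK

lemma q2_pos (hα : 0 < α) (hα1 : α < 1) (hk : 0 < k) (hk1 : k < 1)
    (hl : 0 < l) (hl2 : l < 1) (hx0 : 0 ≤ x) (hx1 : x ≤ 1) :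
    0 < (1-k+α*k) * (1 + k*Kstar α k*(1-l*x)) := by
  rw [q2_eq hα hα1 hk hk1 hl]
  have hkl : k*l < 1 := by nlinarith
  have hkl0 : (0:ℝ) ≤ k*l := by positivity
  have h1 : k*l*(1-α) ≤ k*l := mul_le_of_le_one_right hkl0 (by linarith)
  have h2 : k*l*(1-α)*x ≤ k*l*(1-α)*1 := by
    apply mul_le_mul_of_nonneg_left hx1
    nlinarith
  linarith

lemma F2_pos (hα : 0 < α) (hα1 : α < 1) (hk : 0 < k) (hk1 : k < 1)
    (hl : 0 < l) (hl1 : l < 1 - k + α*k)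
    (hx0 : 0 < x)
    (hxL : x < (1 + k*Kstar α k - Kstar α k) / (1 + k*Kstar α k - l*Kstar α k)) :
    0 < α / ((1-k+α*k) * (1 + k*Kstar α k*(1-l*x))) *
      (x*(1 - (1 + k*Kstar α k - l*Kstar α k)/(1 + k*Kstar α k - Kstar α k)*x)) := by
  obtain ⟨hd1, hd2, e1, e2, hl2⟩ := den_facts hα hα1 hk hk1 hl hl1
  obtain ⟨hLq0, hLq1⟩ := Lq_facts hα hα1 hk hk1 hl hl1
  have hx1 : x < 1 := lt_trans hxL hLq1
  have hqc : 0 < (1 + k*Kstar α k - l*Kstar α k)/(1 + k*Kstar α k - Kstar α k) :=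
    div_pos hd2 hd1
  have hprod1 : (1 + k*Kstar α k - l*Kstar α k)/(1 + k*Kstar α k - Kstar α k) *
      ((1 + k*Kstar α k - Kstar α k) / (1 + k*Kstar α k - l*Kstar α k)) = 1 := by
    rw [div_mul_div_comm, mul_comm (1 + k*Kstar α k - l*Kstar α k), div_self (mul_pos hd1 hd2).ne']
  have h1qc : 0 < 1 - (1 + k*Kstar α k - l*Kstar α k)/(1 + k*Kstar α k - Kstar α k)*x := by
    nlinarith [mul_lt_mul_of_pos_left hxL hqc]
  exact mul_pos (div_pos hα (q2_pos hα hα1 hk hk1 hl hl2 hx0.le hx1.le)) (mul_pos hx0 h1qc)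

lemma F2_sub (hα : 0 < α) (hα1 : α < 1) (hk : 0 < k) (hk1 : k < 1)
    (hl : 0 < l) (hl1 : l < 1 - k + α*k)
    (hx0 : 0 < x)
    (hxL : x < (1 + k*Kstar α k - Kstar α k) / (1 + k*Kstar α k - l*Kstar α k)) :
    α*x - α / ((1-k+α*k) * (1 + k*Kstar α k*(1-l*x))) *
      (x*(1 - (1 + k*Kstar α k - l*Kstar α k)/(1 + k*Kstar α k - Kstar α k)*x)) ≤
    (α * ((1 + k*Kstar α k - l*Kstar α k)/(1 + k*Kstar α k - Kstar α k)) / (1 - k*l*(1-α)))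
      * x^2 := by
  obtain ⟨hd1, hd2, e1, e2, hl2⟩ := den_facts hα hα1 hk hk1 hl hl1
  obtain ⟨hLq0, hLq1⟩ := Lq_facts hα hα1 hk hk1 hl hl1
  have hx1 : x < 1 := lt_trans hxL hLq1
  have hq := q2_eq hα hα1 hk hk1 hl x
  have hqpos := q2_pos hα hα1 hk hk1 hl hl2 hx0.le hx1.le
  have hkl : k*l < 1 := by nlinarith
  have hkl0 : (0:ℝ) ≤ k*l := by positivity
  have hDal : k*l*(1-α) < 1 := by
    have := mul_le_of_le_one_right hkl0 (by linarith : 1-α ≤ 1)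
    linarith
  have hDal0 : 0 < k*l*(1-α) := by
    apply mul_pos (mul_pos hk hl)
    linarith
  set qc := (1 + k*Kstar α k - l*Kstar α k)/(1 + k*Kstar α k - Kstar α k) with hqcdef
  have hqc : 0 < qc := div_pos hd2 hd1
  set C := α * qc / (1 - k*l*(1-α)) with hCdef
  have hC0 : 0 ≤ C := by
    apply div_nonneg (mul_nonneg hα.le hqc.le)
    linarith
  have hne : (1 - k*l*(1-α)) ≠ 0 := ne_of_gt (by linarith)
  have hCkey : C * (1 - k*l*(1-α)) = α*qc := by
    rw [hCdef]
    exact div_mul_cancel₀ _ hne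
  have h2 : α*x - α / ((1-k+α*k) * (1 + k*Kstar α k*(1-l*x))) * (x*(1 - qc*x))
      = (α*x*((1-k+α*k) * (1 + k*Kstar α k*(1-l*x))) - α*(x*(1 - qc*x)))
        / ((1-k+α*k) * (1 + k*Kstar α k*(1-l*x))) := by
    rw [div_mul_eq_mul_div, sub_div' hqpos.ne']
  rw [h2, div_le_iff₀ hqpos, hq]
  -- goal: α x (1-Dal x) - α x (1-qc x) ≤ C x² (1-Dal x)
  have hb1 : C*x^2*(1 - k*l*(1-α)) ≤ C*x^2*(1 - k*l*(1-α)*x) := by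
    apply mul_le_mul_of_nonneg_left _ (mul_nonneg hC0 (sq_nonneg x))
    nlinarith
  have hCkey2 : C*(1 - k*l*(1-α))*x^2 = α*qc*x^2 := by rw [hCkey]
  nlinarith [hb1, hCkey2, mul_nonneg (mul_nonneg hα.le (sq_nonneg x)) hDal0.le]

end Part7

section Part8
open Filter Set Real

set_option maxHeartbeats 3200000 in
theorem ordered_upper_lower
    (α k : ℝ) (hα : 0 < α) (hα1 : α < 1) (hk : 0 < k) (hk1 : k < 1)
    (c : ℝ) (hc : 2 * Real.sqrt α ≤ c)
    (l : ℝ) (hl : 0 < l) (hl1 : l < 1 - k + α * k)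
    (vb : ℝ → ℝ) (hvbC2 : ContDiff ℝ 2 vb) (hvb_mono : Monotone vb)
    (hE1 : ∀ ξ : ℝ, deriv (deriv vb) ξ - c * deriv vb ξ +
        α / ((1 - k + α * k) * (1 + k * Kstar α k * (1 - vb ξ))) * (vb ξ * (1 - vb ξ)) = 0)
    (hvb_bot : Tendsto vb atBot (nhds 0)) (hvb_top : Tendsto vb atTop (nhds 1))
    (hvb_range : ∀ ξ : ℝ, 0 < vb ξ ∧ vb ξ < 1)
    (vc : ℝ → ℝ) (hvcC2 : ContDiff ℝ 2 vc) (hvc_mono : Monotone vc)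
    (hE2 : ∀ ξ : ℝ, deriv (deriv vc) ξ - c * deriv vc ξ +
        α / ((1 - k + α * k) * (1 + k * Kstar α k * (1 - l * vc ξ))) *
          (vc ξ * (1 - (1 + k * Kstar α k - l * Kstar α k) /
              (1 + k * Kstar α k - Kstar α k) * vc ξ)) = 0)
    (hvc_bot : Tendsto vc atBot (nhds 0))
    (hvc_top : Tendsto vc atTop
      (nhds ((1 + k * Kstar α k - Kstar α k) / (1 + k * Kstar α k - l * Kstar α k))))
    (hvc_range : ∀ ξ : ℝ, 0 < vc ξ ∧
        vc ξ < (1 + k * Kstar α k - Kstar α k) / (1 + k * Kstar α k - l * Kstar α k)) :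
    ∃ r : ℝ, 0 ≤ r ∧
      ∀ ξ : ℝ, Kstar α k * l * vc ξ ≤ Kstar α k * vb (ξ + r) ∧ vc ξ ≤ vb (ξ + r) := by
  obtain ⟨hD, hKpos, hDK⟩ := kstar_pos hα hα1 hk hk1
  obtain ⟨hd1, hd2, e1, e2, hl2⟩ := den_facts hα hα1 hk hk1 hl hl1
  obtain ⟨hLq0, hLq1⟩ := Lq_facts hα hα1 hk hk1 hl hl1
  have hsqα : 0 < Real.sqrt α := Real.sqrt_pos.mpr hα
  have hcpos : 0 < c := lt_of_lt_of_le (by linarith) hc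
  have hc2 : 4*α ≤ c^2 := by
    have h2 : (2*Real.sqrt α)^2 = 4*α := by
      rw [mul_pow, Real.sq_sqrt hα.le]; ring
    nlinarith [hc, hsqα]
  have hsqnn : 0 ≤ Real.sqrt (c^2-4*α) := Real.sqrt_nonneg _
  have hsq2 : (Real.sqrt (c^2-4*α))^2 = c^2-4*α := Real.sq_sqrt (by linarith)
  have hsqlt : Real.sqrt (c^2-4*α) < c := by nlinarith
  set lam := (c - Real.sqrt (c^2-4*α))/2 with hlamdef
  set Lam := (c + Real.sqrt (c^2-4*α))/2 with hLamdef
  have hlam : 0 < lam := by rw [hlamdef]; linarith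
  have hle : lam ≤ Lam := by rw [hlamdef, hLamdef]; linarith
  have hsum : lam + Lam = c := by rw [hlamdef, hLamdef]; ring
  have hprod : lam * Lam = α := by
    rw [hlamdef, hLamdef]
    linear_combination (-(1:ℝ)/4) * hsq2
  -- Front structure for vb
  have frontb : Front c lam Lam 1 α vb
      (fun x => α / ((1-k+α*k) * (1 + k*Kstar α k*(1-x))) * (x*(1-x))) := by
    refine ⟨hvbC2, hvb_mono, ?_, fun ξ => (hvb_range ξ).1, fun ξ => (hvb_range ξ).2,
      hvb_bot, hlam, hle, hsum, hα.le, ?_, ?_⟩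
    · intro ξ
      have h1 := hE1 ξ
      show deriv (deriv vb) ξ = c * deriv vb ξ -
        α / ((1-k+α*k) * (1 + k*Kstar α k*(1-vb ξ))) * (vb ξ*(1-vb ξ))
      linarith
    · intro x hx0 hx1
      exact F1_pos hα hα1 hk hk1 hx0 hx1
    · intro x hx0 hx1
      rw [hprod]
      exact F1_sub hα hα1 hk hk1 hx0 hx1
  have hstrictb : ∀ x, 0 < x → x < 1 →
      (fun x => α / ((1-k+α*k) * (1 + k*Kstar α k*(1-x))) * (x*(1-x))) x < lam*Lam*x := by
    intro x hx0 hx1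
    show α / ((1-k+α*k) * (1 + k*Kstar α k*(1-x))) * (x*(1-x)) < lam*Lam*x
    rw [hprod]
    exact F1_lt hα hα1 hk hk1 hx0 hx1
  -- Front structure for vc
  have hkl : k*l < 1 := by nlinarith
  have hkl0 : (0:ℝ) ≤ k*l := by positivity
  have hDal : k*l*(1-α) < 1 := by
    have := mul_le_of_le_one_right hkl0 (by linarith : 1-α ≤ 1)
    linarith
  have hC3c0 : 0 ≤ α * ((1 + k*Kstar α k - l*Kstar α k)/(1 + k*Kstar α k - Kstar α k))
      / (1 - k*l*(1-α)) := by
    apply div_nonneg (mul_nonneg hα.le (div_pos hd2 hd1).le)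
    linarith
  have frontc : Front c lam Lam
      ((1 + k*Kstar α k - Kstar α k) / (1 + k*Kstar α k - l*Kstar α k))
      (α * ((1 + k*Kstar α k - l*Kstar α k)/(1 + k*Kstar α k - Kstar α k)) / (1 - k*l*(1-α)))
      vc
      (fun x => α / ((1-k+α*k) * (1 + k*Kstar α k*(1-l*x))) *
        (x*(1 - (1 + k*Kstar α k - l*Kstar α k)/(1 + k*Kstar α k - Kstar α k)*x))) := by
    refine ⟨hvcC2, hvc_mono, ?_, fun ξ => (hvc_range ξ).1, fun ξ => (hvc_range ξ).2,
      hvc_bot, hlam, hle, hsum, hC3c0, ?_, ?_⟩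
    · intro ξ
      have h1 := hE2 ξ
      show deriv (deriv vc) ξ = c * deriv vc ξ -
        α / ((1-k+α*k) * (1 + k*Kstar α k*(1-l*vc ξ))) *
          (vc ξ*(1 - (1 + k*Kstar α k - l*Kstar α k)/(1 + k*Kstar α k - Kstar α k)*vc ξ))
      linarith
    · intro x hx0 hxL
      exact F2_pos hα hα1 hk hk1 hl hl1 hx0 hxL
    · intro x hx0 hxL
      rw [hprod]
      exact F2_sub hα hα1 hk hk1 hl hl1 hx0 hxL
  -- threshold point for vb near +∞
  have hη1 : max ((1 + k*Kstar α k - Kstar α k) / (1 + k*Kstar α k - l*Kstar α k)) (1/2) < 1 :=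
    max_lt hLq1 (by norm_num)
  obtain ⟨B₁, hB₁⟩ : ∃ B₁, ∀ x ≥ B₁,
      max ((1 + k*Kstar α k - Kstar α k) / (1 + k*Kstar α k - l*Kstar α k)) (1/2) < vb x := by
    have h1 := hvb_top.eventually (eventually_gt_nhds hη1)
    rw [eventually_atTop] at h1
    exact h1
  rcases eq_or_lt_of_le hle with hcrit | hgap
  · -- CRITICAL CASE : lam = Lam
    obtain ⟨Cc, Tc, hCc, hCbd⟩ := frontc.upper_crit hcrit.symm
    obtain ⟨c₁, hc₁, hlb⟩ := frontb.lower_crit hcrit.symm hstrictb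
    obtain ⟨T₂, hT₂Tc, hT₂lam, hT₂small⟩ :=
      decay_linear_small (A := Tc) hlam hCc (show 0 < vb 0 from (hvb_range 0).1)
    -- monotone envelope bound on (-∞, T₂]
    have hmono2 : ∀ ξ ≤ T₂, Cc*(1+(Tc-ξ))*Real.exp (lam*ξ) ≤ Cc*(1+(Tc-T₂))*Real.exp (lam*T₂) := by
      have hd : ∀ x, HasDerivAt (fun y => Cc*(1+(Tc-y))*Real.exp (lam*y))
          (Cc*((1+(Tc-x))*(lam*Real.exp (lam*x)) + (-1)*Real.exp (lam*x))) x := by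
        intro x
        have e1' : HasDerivAt (fun y:ℝ => 1+(Tc-y)) (-1 : ℝ) x := by
          simpa using ((hasDerivAt_id x).const_sub Tc).const_add 1
        have h2 := (e1'.mul (hasDerivAt_expmul lam x)).const_mul Cc
        refine (h2.congr_deriv ?_).congr_of_eventuallyEq (Filter.Eventually.of_forall fun y => ?_)
        · ring
        · show _ = Cc * ((1+(Tc-y)) * Real.exp (lam*y)); ring
      have := Front.mono_Iic (T := T₂) hd (fun x hx => by
        have h1 : 1/lam ≤ 1+(Tc-x) := by
          have : 1/lam ≤ 1+(Tc-T₂) := hT₂lam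
          linarith
        have h2 : 1 ≤ lam*(1+(Tc-x)) := by
          rw [div_le_iff₀ hlam] at h1
          linarith
        have h3 := (Real.exp_pos (lam*x)).le
        have h4 : Real.exp (lam*x) * 1 ≤ Real.exp (lam*x) * (lam*(1+(Tc-x))) :=
          mul_le_mul_of_nonneg_left h2 h3
        have h5 : 0 ≤ (1+(Tc-x))*(lam*Real.exp (lam*x)) + (-1)*Real.exp (lam*x) := by
          nlinarith only [h4]
        exact mul_nonneg hCc.le h5)
      exact this
    obtain ⟨r₁, hr₁0, hr₁⟩ := exp_beats_linear hlam hc₁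
      (show (0:ℝ) ≤ Cc*(1+|Tc|) by positivity)
    refine ⟨max (max 0 (B₁ - T₂)) r₁, le_trans (le_max_left 0 (B₁ - T₂)) (le_max_left _ _),
      fun ξ => ?_⟩
    set r := max (max 0 (B₁ - T₂)) r₁ with hrdef
    have hr0 : 0 ≤ r := le_trans (le_max_left 0 (B₁ - T₂)) (le_max_left _ _)
    have hmain : vc ξ ≤ vb (ξ + r) := by
      rcases le_or_gt ξ T₂ with hξ | hξ
      · rcases le_or_gt (ξ + r) 0 with hξr | hξr
        · -- deep tail
          have k1 : vc ξ ≤ Cc*(1+(Tc-ξ))*Real.exp (lam*ξ) := hCbd ξ (le_trans hξ hT₂Tc)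
          have k2 : c₁*(1+(0-(ξ+r)))*Real.exp (lam*(ξ+r)) ≤ vb (ξ+r) := hlb (ξ+r) hξr
          have hB := hr₁ r (le_max_right _ _)
          have hexp : Real.exp (lam*(ξ+r)) = Real.exp (lam*ξ) * Real.exp (lam*r) := by
            rw [← Real.exp_add]; congr 1; ring
          have hTa : Tc ≤ |Tc| := le_abs_self Tc
          have hTa0 : 0 ≤ |Tc| := abs_nonneg _
          have hw0 : 0 ≤ -ξ - r := by linarith
          have hA0 : (0:ℝ) ≤ 1+(0-(ξ+r)) := by linarith
          have hcore : (1+(Tc-ξ)) ≤ ((1+|Tc|)*(1+r))*(1+(0-(ξ+r))) := by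
            nlinarith only [hTa, hTa0, hr0, hw0, mul_nonneg (add_nonneg hTa0 hr0) hw0,
              mul_nonneg (mul_nonneg hTa0 hr0) hA0]
          have hstep0 : Cc*(1+(Tc-ξ)) ≤ (Cc*(1+|Tc|)*(1+r))*(1+(0-(ξ+r))) := by
            have := mul_le_mul_of_nonneg_left hcore hCc.le
            nlinarith only [this]
          have hstep : Cc*(1+(Tc-ξ)) ≤ (c₁*Real.exp (lam*r))*(1+(0-(ξ+r))) := by
            have h5 := mul_le_mul_of_nonneg_right hB hA0
            linarith only [hstep0, h5]
          have hstep2 : Cc*(1+(Tc-ξ))*Real.exp (lam*ξ) ≤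
              c₁*(1+(0-(ξ+r)))*Real.exp (lam*(ξ+r)) := by
            have h6 := mul_le_mul_of_nonneg_right hstep (Real.exp_pos (lam*ξ)).le
            have h7 : (c₁*Real.exp (lam*r))*(1+(0-(ξ+r)))*Real.exp (lam*ξ)
                = c₁*(1+(0-(ξ+r)))*Real.exp (lam*(ξ+r)) := by
              rw [hexp]; ring
            linarith only [h6, h7]
          linarith only [k1, hstep2, k2]
        · -- overlap region
          have k1 : vc ξ ≤ Cc*(1+(Tc-ξ))*Real.exp (lam*ξ) := hCbd ξ (le_trans hξ hT₂Tc)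
          have k2 := hmono2 ξ hξ
          have k4 : vb 0 ≤ vb (ξ+r) := hvb_mono hξr.le
          linarith [hT₂small]
      · -- right region
        have h1 : B₁ ≤ ξ + r := by
          have h2 : B₁ - T₂ ≤ r := le_trans (le_max_right 0 (B₁ - T₂)) (le_max_left _ _)
          linarith
        have h2 := hB₁ (ξ+r) h1
        have h3 := (hvc_range ξ).2
        have h4 := le_max_left ((1 + k*Kstar α k - Kstar α k) /
          (1 + k*Kstar α k - l*Kstar α k)) (1/2:ℝ)
        linarith
    refine ⟨?_, hmain⟩
    have h1 : l * vc ξ ≤ vc ξ := by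
      have h2 := mul_nonneg (by linarith : (0:ℝ) ≤ 1-l) (hvc_range ξ).1.le
      nlinarith only [h2]
    have h3 := mul_le_mul_of_nonneg_left (le_trans h1 hmain) hKpos.le
    nlinarith only [h3]
  · -- NONCRITICAL CASE : lam < Lam
    obtain ⟨C, Tc, hCpos, hCbd⟩ := frontc.upper_exp hgap
    set T₂ := min Tc (-(Real.log (2*C))/lam) with hT₂def
    have hT₂Tc : T₂ ≤ Tc := min_le_left _ _
    have hhalf : C * Real.exp (lam*T₂) ≤ 1/2 := by
      have h2 : T₂ ≤ -(Real.log (2*C))/lam := min_le_right _ _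
      have h1 : lam*T₂ ≤ -(Real.log (2*C)) := by
        rw [le_div_iff₀ hlam] at h2
        linarith
      have h3 : Real.exp (lam*T₂) ≤ Real.exp (-(Real.log (2*C))) := Real.exp_le_exp.mpr h1
      have h4 : Real.exp (-(Real.log (2*C))) = (2*C)⁻¹ := by
        rw [Real.exp_neg, Real.exp_log (by linarith)]
      have h5 : C * (2*C)⁻¹ = 1/2 := by
        field_simp
      have h6 : C*Real.exp (lam*T₂) ≤ C*(2*C)⁻¹ := by
        rw [← h4]
        exact mul_le_mul_of_nonneg_left h3 hCpos.le
      linarith only [h5, h6]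
    refine ⟨max 0 (B₁ - T₂), le_max_left _ _, fun ξ => ?_⟩
    set r := max 0 (B₁ - T₂) with hrdef
    have hr0 : 0 ≤ r := le_max_left _ _
    have hmain : vc ξ ≤ vb (ξ + r) := by
      rcases le_or_gt ξ T₂ with hξ | hξ
      · have k1 : vc ξ ≤ C*Real.exp (lam*ξ) := hCbd ξ (le_trans hξ hT₂Tc)
        have k5 : Real.exp (lam*(ξ+r) - lam*(T₂+r)) * vb (T₂+r) ≤ vb (ξ+r) :=
          frontb.lower_exp hstrictb (T₂+r) (ξ+r) (by linarith)
        have k6 : B₁ ≤ T₂ + r := by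
          have h2 : B₁ - T₂ ≤ r := le_max_right _ _
          linarith
        have k7 : 1/2 ≤ vb (T₂+r) := by
          have h2 := hB₁ (T₂+r) k6
          have h4 := le_max_right ((1 + k*Kstar α k - Kstar α k) /
            (1 + k*Kstar α k - l*Kstar α k)) (1/2:ℝ)
          linarith
        have hid : C*Real.exp (lam*ξ) =
            (C*Real.exp (lam*T₂)) * Real.exp (lam*(ξ+r) - lam*(T₂+r)) := by
          rw [mul_assoc, ← Real.exp_add]
          congr 2
          ring
        have hexppos := (Real.exp_pos (lam*(ξ+r) - lam*(T₂+r))).le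
        have k8 : (C*Real.exp (lam*T₂)) * Real.exp (lam*(ξ+r) - lam*(T₂+r)) ≤
            (1/2) * Real.exp (lam*(ξ+r) - lam*(T₂+r)) :=
          mul_le_mul_of_nonneg_right hhalf hexppos
        have k9 : (1/2) * Real.exp (lam*(ξ+r) - lam*(T₂+r)) ≤
            vb (T₂+r) * Real.exp (lam*(ξ+r) - lam*(T₂+r)) :=
          mul_le_mul_of_nonneg_right k7 hexppos
        linarith only [k1, k5, k8, k9, hid]
      · have h1 : B₁ ≤ ξ + r := by
          have h2 : B₁ - T₂ ≤ r := le_max_right _ _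
          linarith
        have h2 := hB₁ (ξ+r) h1
        have h3 := (hvc_range ξ).2
        have h4 := le_max_left ((1 + k*Kstar α k - Kstar α k) /
          (1 + k*Kstar α k - l*Kstar α k)) (1/2:ℝ)
        linarith
    refine ⟨?_, hmain⟩
    have h1 : l * vc ξ ≤ vc ξ := by
      have h2 := mul_nonneg (by linarith : (0:ℝ) ≤ 1-l) (hvc_range ξ).1.le
      nlinarith only [h2]
    have h3 := mul_le_mul_of_nonneg_left (le_trans h1 hmain) hKpos.le
    nlinarith only [h3]

end Part8
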